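/- arXiv:1506.00226 — 2 statements merged into one kernel-verified Lean document; each statement's English description precedes it below -/
import Mathlib

section
/- Let a, b > 0 and v ∈ (0, 1) with 0 < v ≤ 1/2. Then ((1 − v)a + v·b)² ≥ v²(a − b)² + r₁(√(ab) − a)² + K(√h, 2)^{r̂₁} · (a^{1−v} b^{v})², where h = b/a, r = min{v, 1 − v}, r₁ = min{2r, 1 − 2r} and r̂₁ = min{2r₁, 1 − 2r₁}. -/
/-- The Kantorovich constant `K(t, 2) = (t + 1)^2 / (4 t)`. -/
noncomputable def Kant (t : ℝ) : ℝ := (t + 1) ^ 2 / (4 * t)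

lemma kant_inv {t : ℝ} (ht : 0 < t) : Kant t⁻¹ = Kant t := by
  unfold Kant
  rw [div_eq_div_iff (by positivity) (by positivity)]
  field_simp
  ring

lemma kant_eq {x y : ℝ} (hx : 0 < x) (hy : 0 < y) :
    Kant (y / x) = (x + y) ^ 2 / (4 * (x * y)) := by
  unfold Kant
  rw [div_eq_div_iff (by positivity) (by positivity)]
  field_simp
  ring

lemma lemA0 {x y v : ℝ} (hx : 0 < x) (hy : 0 < y) (hv0 : 0 ≤ v) (hv : v ≤ 1/2) :
    Kant (y / x) ^ v * (x ^ (1 - v) * y ^ v) ≤ (1 - v) * x + v * y := by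
  have key := Real.geom_mean_le_arith_mean2_weighted
    (by linarith : (0:ℝ) ≤ 1 - 2*v) (by linarith : (0:ℝ) ≤ 2*v)
    hx.le (by positivity : (0:ℝ) ≤ (x+y)/2) (by ring)
  have h1 : x ^ (1 - v) = x ^ (1 - 2*v) * x ^ v := by
    rw [← Real.rpow_add hx]; ring_nf
  have h2 : ((x+y)/2) ^ (2*v) = (((x+y)/2)^(2:ℕ)) ^ v := by
    rw [← Real.rpow_natCast ((x+y)/2) 2, ← Real.rpow_mul (by positivity)]
    norm_num
  have h3 : ((x+y)^2/(4*(x*y))) ^ v * (x ^ v * y ^ v) = (((x+y)/2)^(2:ℕ)) ^ v := by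
    rw [← Real.mul_rpow hx.le hy.le, ← Real.mul_rpow (by positivity) (by positivity)]
    congr 1
    field_simp
    ring
  have heq : Kant (y / x) ^ v * (x ^ (1 - v) * y ^ v)
      = x ^ (1 - 2*v) * ((x+y)/2) ^ (2*v) := by
    rw [kant_eq hx hy, h1, h2]
    linear_combination (x ^ (1 - 2*v)) * h3
  rw [heq]
  have : (1 - 2*v)*x + 2*v*((x+y)/2) = (1-v)*x + v*y := by ring
  linarith

lemma lemA {x y v : ℝ} (hx : 0 < x) (hy : 0 < y) (hv0 : 0 ≤ v) (hv1 : v ≤ 1) :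
    Kant (y / x) ^ (min v (1-v)) * (x ^ (1 - v) * y ^ v) ≤ (1 - v) * x + v * y := by
  rcases le_total v (1/2) with h | h
  · rw [min_eq_left (by linarith)]
    exact lemA0 hx hy hv0 h
  · rw [min_eq_right (by linarith)]
    have key := lemA0 hy hx (by linarith : (0:ℝ) ≤ 1 - v) (by linarith)
    rw [show x / y = (y/x)⁻¹ by rw [inv_div], kant_inv (by positivity),
        show 1 - (1 - v) = v by ring] at key
    have e : Kant (y/x) ^ (1-v) * (y ^ v * x ^ (1-v))
        = Kant (y/x) ^ (1-v) * (x ^ (1-v) * y ^ v) := by ring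
    rw [e] at key
    linarith

lemma lemB0 {x y v : ℝ} (hx : 0 < x) (hy : 0 < y) (hv0 : 0 ≤ v) (hv : v ≤ 1/2) :
    Kant (Real.sqrt (y / x)) ^ (min (2*v) (1-2*v)) * (x ^ (1 - v) * y ^ v)
      + v * (Real.sqrt x - Real.sqrt y)^2 ≤ (1 - v) * x + v * y := by
  have hxy : (0:ℝ) < x * y := by positivity
  have hs : (0:ℝ) < Real.sqrt (x*y) := Real.sqrt_pos.2 hxy
  have hA := lemA (x := x) (y := Real.sqrt (x*y)) (v := 2*v) hx hs
    (by linarith) (by linarith)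
  have h1 : Real.sqrt (x*y) / x = Real.sqrt (y / x) := by
    rw [show y / x = x*y / x^2 by field_simp, Real.sqrt_div hxy.le,
        Real.sqrt_sq hx.le]
  have h2 : (Real.sqrt (x*y)) ^ (2*v) = x ^ v * y ^ v := by
    rw [Real.sqrt_eq_rpow, ← Real.rpow_mul hxy.le, show (1/2)*(2*v) = v by ring,
        Real.mul_rpow hx.le hy.le]
  have h3 : x ^ (1-2*v) * (x ^ v * y ^ v) = x ^ (1-v) * y ^ v := by
    rw [show (1:ℝ)-v = (1-2*v) + v by ring, Real.rpow_add hx]; ring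
  rw [h1, h2] at hA
  rw [show min (2*v) (1-2*v) = min (2*v) (1-2*v) from rfl] at hA
  have hA' : Kant (Real.sqrt (y/x)) ^ (min (2*v) (1-2*v)) * (x ^ (1-v) * y ^ v)
      ≤ (1-2*v)*x + 2*v*Real.sqrt (x*y) := by
    calc Kant (Real.sqrt (y/x)) ^ (min (2*v) (1-2*v)) * (x ^ (1-v) * y ^ v)
        = Kant (Real.sqrt (y/x)) ^ (min (2*v) (1-2*v)) * (x ^ (1-2*v) * (x ^ v * y ^ v)) := by
          rw [h3]
      _ ≤ (1-2*v)*x + 2*v*Real.sqrt (x*y) := hA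
  have h4 : (Real.sqrt x - Real.sqrt y)^2 = x + y - 2*Real.sqrt (x*y) := by
    rw [sub_sq, Real.sq_sqrt hx.le, Real.sq_sqrt hy.le, Real.sqrt_mul hx.le]
    ring
  rw [h4]
  nlinarith [hA']

lemma lemB {x y v : ℝ} (hx : 0 < x) (hy : 0 < y) (hv0 : 0 ≤ v) (hv1 : v ≤ 1) :
    Kant (Real.sqrt (y / x)) ^ (min (2*(min v (1-v))) (1-2*(min v (1-v))))
        * (x ^ (1 - v) * y ^ v)
      + (min v (1-v)) * (Real.sqrt x - Real.sqrt y)^2 ≤ (1 - v) * x + v * y := by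
  rcases le_total v (1/2) with h | h
  · rw [min_eq_left (by linarith : v ≤ 1 - v)]
    exact lemB0 hx hy hv0 h
  · rw [min_eq_right (by linarith : 1 - v ≤ v)]
    have key := lemB0 hy hx (by linarith : (0:ℝ) ≤ 1-v) (by linarith)
    rw [show 1 - (1-v) = v by ring] at key
    have hyx : (0:ℝ) < y / x := by positivity
    rw [show x / y = (y/x)⁻¹ by rw [inv_div], Real.sqrt_inv,
        kant_inv (Real.sqrt_pos.2 hyx)] at key
    have e1 : (Real.sqrt y - Real.sqrt x)^2 = (Real.sqrt x - Real.sqrt y)^2 := by ring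
    rw [e1] at key
    have e2 : Kant (Real.sqrt (y/x)) ^ (min (2*(1-v)) (1-2*(1-v))) * (y ^ v * x ^ (1-v))
        = Kant (Real.sqrt (y/x)) ^ (min (2*(1-v)) (1-2*(1-v))) * (x ^ (1-v) * y ^ v) := by
      ring
    rw [e2] at key
    linarith

theorem stmt_3 (a b v : ℝ) (ha : 0 < a) (hb : 0 < b) (hv0 : 0 < v) (hv : v ≤ 1 / 2)
    (h r r1 rh1 : ℝ) (hh : h = b / a) (hr : r = min v (1 - v))
    (hr1 : r1 = min (2 * r) (1 - 2 * r)) (hrh1 : rh1 = min (2 * r1) (1 - 2 * r1)) :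
    ((1 - v) * a + v * b) ^ 2 ≥
      v ^ 2 * (a - b) ^ 2 + r1 * (Real.sqrt (a * b) - a) ^ 2
        + Kant (Real.sqrt h) ^ rh1 * (a ^ (1 - v) * b ^ v) ^ 2 := by
  subst hh hr hr1 hrh1
  rw [min_eq_left (by linarith : v ≤ 1 - v)]
  have key := lemB (x := a^2) (y := a*b) (v := 2*v) (by positivity) (by positivity)
    (by linarith) (by linarith)
  have e0 : (a:ℝ)*b/a^2 = b/a := by field_simp
  rw [e0, Real.sqrt_sq ha.le] at key
  have e1 : (a - Real.sqrt (a*b))^2 = (Real.sqrt (a*b) - a)^2 := by ring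
  rw [e1] at key
  have hp : ((a:ℝ)^2) ^ (1-2*v) * (a*b) ^ (2*v) = (a ^ (1-v) * b ^ v)^2 := by
    have f1 : ((a:ℝ)^2) ^ (1-2*v) = a ^ (2-4*v) := by
      rw [← Real.rpow_natCast a 2, ← Real.rpow_mul ha.le]
      congr 1
      push_cast
      ring
    have f2 : ((a:ℝ)*b) ^ (2*v) = a ^ (2*v) * b ^ (2*v) := Real.mul_rpow ha.le hb.le
    have f3 : (a ^ (1-v) * b ^ v)^2 = a ^ (2-2*v) * b ^ (2*v) := by
      rw [mul_pow, ← Real.rpow_natCast (a ^ (1-v)) 2, ← Real.rpow_mul ha.le,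
          ← Real.rpow_natCast (b ^ v) 2, ← Real.rpow_mul hb.le]
      congr 1 <;> (push_cast; ring_nf)
    rw [f1, f2, f3, ← mul_assoc, ← Real.rpow_add ha]
    congr 2
    ring
  have e2 : ((1:ℝ) - 2*v) = 1 - (2*v) := rfl
  rw [hp] at key
  have hid : (1 - 2*v)*(a^2) + (2*v)*(a*b) = ((1-v)*a + v*b)^2 - v^2*(a-b)^2 := by ring
  nlinarith [key]
end

section
/- Let A, B be n×n positive definite complex matrices and let m, m', M, M' be positive reals satisfying either m'·I ≤ A ≤ m·I < M·I ≤ B ≤ M'·I or m'·I ≤ B ≤ m·I < M·I ≤ A ≤ M'·I in the Loewner order. If 0 < v ≤ 1/2, then A∇_v B ≥ 2v(A∇B − A#B) + r₁(A#B − 2(A#_{1/4}B) + A) + K(h^{1/4}, 2)^{r̂₁} · (A#_v B) in the Loewner order, where h = M/m, r = min{v, 1 − v}, r₁ = min{2r, 1 − 2r} and r̂₁ = min{2r₁, 1 − 2r₁}. -/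
open Matrix
open scoped ComplexOrder

/-- Real power of a matrix, defined for Hermitian matrices via the spectral
decomposition (functional calculus); junk value otherwise. -/
noncomputable def mrpow {n : ℕ} (A : Matrix (Fin n) (Fin n) ℂ) (t : ℝ) :
    Matrix (Fin n) (Fin n) ℂ :=
  if h : A.IsHermitian then
    (h.eigenvectorUnitary : Matrix (Fin n) (Fin n) ℂ)
      * Matrix.diagonal (fun i => ((h.eigenvalues i ^ t : ℝ) : ℂ))
      * star (h.eigenvectorUnitary : Matrix (Fin n) (Fin n) ℂ)
  else A

/-- Weighted arithmetic mean `A ∇_v B = (1 - v) A + v B`. -/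
noncomputable def anabla {n : ℕ} (v : ℝ) (A B : Matrix (Fin n) (Fin n) ℂ) :
    Matrix (Fin n) (Fin n) ℂ :=
  ((1 - v : ℝ) : ℂ) • A + ((v : ℝ) : ℂ) • B

/-- Weighted geometric mean `A #_v B = A^{1/2} (A^{-1/2} B A^{-1/2})^v A^{1/2}`. -/
noncomputable def asharp {n : ℕ} (v : ℝ) (A B : Matrix (Fin n) (Fin n) ℂ) :
    Matrix (Fin n) (Fin n) ℂ :=
  mrpow A (1 / 2) * mrpow (mrpow A (-(1 / 2)) * B * mrpow A (-(1 / 2))) v * mrpow A (1 / 2)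

/-- Heinz operator mean `H_v(A, B) = (A #_v B + A #_{1-v} B) / 2`. -/
noncomputable def heinz {n : ℕ} (v : ℝ) (A B : Matrix (Fin n) (Fin n) ℂ) :
    Matrix (Fin n) (Fin n) ℂ :=
  ((1 / 2 : ℝ) : ℂ) • (asharp v A B + asharp (1 - v) A B)

/-- The Loewner order: `loewner X Y` iff `Y - X` is positive semidefinite. -/
def loewner {n : ℕ} (X Y : Matrix (Fin n) (Fin n) ℂ) : Prop := (Y - X).PosSemidef

/-! ### Scalar lemmas -/

lemma Kant_pos {t : ℝ} (ht : 0 < t) : 0 < Kant t := by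
  have : 0 < (t+1)^2 := by positivity
  exact div_pos this (by linarith)

lemma Kant_mono {t z : ℝ} (ht : 1 ≤ t) (htz : t ≤ z) : Kant t ≤ Kant z := by
  rw [Kant, Kant, div_le_div_iff₀ (by nlinarith) (by nlinarith)]
  nlinarith [sq_nonneg (z - t), mul_nonneg (sub_nonneg.2 htz) (sub_nonneg.2 (one_le_mul_of_one_le_of_one_le ht (ht.trans htz) : (1:ℝ) ≤ t * z))]

lemma Kant_inv {z : ℝ} (hz : 0 < z) : Kant (1/z) = Kant z := by
  rw [Kant, Kant]; field_simp; ring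

lemma Kant_le_of_ratio {t z : ℝ} (ht : 1 ≤ t) (hz : 0 < z) (hr : t ≤ z ∨ z ≤ 1/t) :
    Kant t ≤ Kant z := by
  rcases hr with hr | hr
  · exact Kant_mono ht hr
  · have h1 : t ≤ 1/z := by
      rw [le_div_iff₀ hz]
      calc t * z ≤ t * (1/t) := by
            apply mul_le_mul_of_nonneg_left hr (by linarith)
        _ = 1 := by field_simp
    calc Kant t ≤ Kant (1/z) := Kant_mono ht h1
      _ = Kant z := Kant_inv hz

lemma L1core {u z : ℝ} (hu0 : 0 ≤ u) (hu1 : u ≤ 1) (hz : 0 < z) :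
    Kant z ^ (min u (1-u)) * z ^ u ≤ (1-u) + u * z := by
  have hz1 : (0:ℝ) < (z+1)/2 := by linarith
  rcases le_total u (1/2) with hu | hu
  · rw [min_eq_left (by linarith)]
    have h1 : Kant z ^ u * z ^ u = ((z+1)/2) ^ (2*u) := by
      rw [← Real.mul_rpow (Kant_pos hz).le hz.le]
      have h2 : Kant z * z = ((z+1)/2)^(2:ℝ) := by
        rw [Kant, Real.rpow_two]; field_simp; ring
      rw [h2, ← Real.rpow_mul hz1.le]
    rw [h1]
    have h2 := Real.geom_mean_le_arith_mean2_weighted (by linarith : (0:ℝ) ≤ 1 - 2*u)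
      (by linarith : (0:ℝ) ≤ 2*u) (zero_le_one) hz1.le (by ring)
    rw [Real.one_rpow, one_mul] at h2
    linarith
  · rw [min_eq_right (by linarith)]
    have h1 : Kant z ^ (1-u) * z ^ u = ((z+1)/2) ^ (2-2*u) * z ^ (2*u-1) := by
      have hK : Kant z = ((z+1)/2)^(2:ℝ) / z := by
        rw [Kant, Real.rpow_two, div_pow, div_div]; norm_num
      rw [hK, Real.div_rpow (by positivity) hz.le, ← Real.rpow_mul hz1.le,
        div_mul_eq_mul_div, div_eq_iff (by positivity), mul_assoc, ← Real.rpow_add hz]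
      rw [show 2*(1-u) = 2-2*u by ring, show 2*u-1+(1-u) = u by ring]
    rw [h1]
    have h2 := Real.geom_mean_le_arith_mean2_weighted (by linarith : (0:ℝ) ≤ 2-2*u)
      (by linarith : (0:ℝ) ≤ 2*u-1) hz1.le hz.le (by ring)
    linarith [h2]

lemma L1 {u a b t : ℝ} (hu0 : 0 ≤ u) (hu1 : u ≤ 1) (ha : 0 < a) (hb : 0 < b) (ht : 1 ≤ t)
    (hr : t ≤ b/a ∨ b/a ≤ 1/t) :
    Kant t ^ (min u (1-u)) * (a ^ (1-u) * b ^ u) ≤ (1-u)*a + u*b := by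
  set z := b/a with hzdef
  have hz : 0 < z := div_pos hb ha
  have hKt : Kant t ≤ Kant z := Kant_le_of_ratio ht hz hr
  have hmin : 0 ≤ min u (1-u) := le_min hu0 (by linarith)
  have h1 : Kant t ^ (min u (1-u)) ≤ Kant z ^ (min u (1-u)) :=
    Real.rpow_le_rpow (Kant_pos (by linarith : (0:ℝ) < t)).le hKt hmin
  have hcore := L1core hu0 hu1 hz
  have hb' : b = a * z := by rw [hzdef]; field_simp
  have haa : a^(1-u) * a^u = a := by
    rw [← Real.rpow_add ha]; norm_num
  calc Kant t ^ (min u (1-u)) * (a^(1-u) * b^u)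
      ≤ Kant z ^ (min u (1-u)) * (a^(1-u) * b^u) := by
        apply mul_le_mul_of_nonneg_right h1 (by positivity)
    _ = a * (Kant z ^ (min u (1-u)) * z ^ u) := by
        rw [hb', Real.mul_rpow ha.le hz.le,
          show a^(1-u) * (a^u * z^u) = (a^(1-u)*a^u) * z^u by ring, haa]
        ring
    _ ≤ a * ((1-u) + u*z) := mul_le_mul_of_nonneg_left hcore ha.le
    _ = (1-u)*a + u*b := by rw [hb']; ring

lemma scalar_main {v h r1 rh1 x : ℝ} (hv0 : 0 < v) (hv : v ≤ 1/2) (hh : 1 < h)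
    (hr1 : r1 = min (2*v) (1-2*v)) (hrh1 : rh1 = min (2*r1) (1-2*r1))
    (hx : 0 < x) (hxb : h ≤ x ∨ x ≤ 1/h) :
    2*v*((1-1/2) + 1/2*x - x^((1:ℝ)/2)) + r1*(x^((1:ℝ)/2) - 2*x^((1:ℝ)/4) + 1)
      + Kant (h^((1:ℝ)/4)) ^ rh1 * x^v ≤ (1-v) + v*x := by
  set t := h^((1:ℝ)/4) with htdef
  have ht1 : 1 ≤ t := by
    have h2 := Real.rpow_le_rpow (by norm_num : (0:ℝ) ≤ 1) hh.le
      (by norm_num : (0:ℝ) ≤ 1/4)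
    rwa [Real.one_rpow] at h2
  have hs4 : 0 < x^((1:ℝ)/4) := Real.rpow_pos_of_pos hx _
  have hs2 : 0 < x^((1:ℝ)/2) := Real.rpow_pos_of_pos hx _
  have hs42 : x^((1:ℝ)/4) * x^((1:ℝ)/4) = x^((1:ℝ)/2) := by
    rw [← Real.rpow_add hx]; norm_num
  have hratio : t ≤ x^((1:ℝ)/4) ∨ x^((1:ℝ)/4) ≤ 1/t := by
    rcases hxb with hc | hc
    · left; exact Real.rpow_le_rpow (by linarith) hc (by norm_num)
    · right
      have h2 := Real.rpow_le_rpow hx.le hc (by norm_num : (0:ℝ) ≤ 1/4)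
      rwa [Real.div_rpow (by norm_num) (by linarith), Real.one_rpow] at h2
  rcases le_total v (1/4) with hv4 | hv4
  · have hr1' : r1 = 2*v := by rw [hr1, min_eq_left]; linarith
    have hrh1' : rh1 = min (4*v) (1-4*v) := by
      rw [hrh1, hr1', show 2*(2*v) = 4*v by ring]
    have key := L1 (u := 4*v) (a := 1) (b := x^((1:ℝ)/4)) (t := t)
      (by linarith) (by linarith) one_pos hs4 ht1 (by simpa using hratio)
    rw [Real.one_rpow, one_mul, mul_one,
      show (x^((1:ℝ)/4))^(4*v) = x^v from by
        rw [← Real.rpow_mul hx.le, show (1:ℝ)/4*(4*v) = v by ring]] at key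
    rw [hr1', hrh1']
    rw [show 1 - 4*v = 1 - (4*v) by ring] at key
    linarith
  · have hr1' : r1 = 1-2*v := by rw [hr1, min_eq_right]; linarith
    have hrh1' : rh1 = min (2-4*v) (4*v-1) := by
      rw [hrh1, hr1', show 2*(1-2*v) = 2-4*v by ring, show 1-(2-4*v) = 4*v-1 by ring]
    have hdiv : x^((1:ℝ)/2)/x^((1:ℝ)/4) = x^((1:ℝ)/4) := by
      rw [← hs42]; field_simp
    have key := L1 (u := 4*v-1) (a := x^((1:ℝ)/4)) (b := x^((1:ℝ)/2)) (t := t)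
      (by linarith) (by linarith) hs4 hs2 ht1 (by rw [hdiv]; exact hratio)
    rw [show (x^((1:ℝ)/4))^(1-(4*v-1)) * (x^((1:ℝ)/2))^(4*v-1) = x^v from by
        rw [← Real.rpow_mul hx.le, ← Real.rpow_mul hx.le, ← Real.rpow_add hx,
          show (1:ℝ)/4*(1-(4*v-1)) + 1/2*(4*v-1) = v by ring],
      show min (4*v-1) (1-(4*v-1)) = min (2-4*v) (4*v-1) from by
        rw [min_comm, show 1-(4*v-1) = 2-4*v by ring]] at key
    rw [hr1', hrh1']
    linarith

/-! ### Functional calculus for Hermitian matrices -/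

noncomputable def fc {n : ℕ} {X : Matrix (Fin n) (Fin n) ℂ} (hX : X.IsHermitian)
    (f : ℝ → ℝ) : Matrix (Fin n) (Fin n) ℂ :=
  (hX.eigenvectorUnitary : Matrix (Fin n) (Fin n) ℂ)
    * Matrix.diagonal (fun i => ((f (hX.eigenvalues i) : ℝ) : ℂ))
    * star (hX.eigenvectorUnitary : Matrix (Fin n) (Fin n) ℂ)

section fclemmas

variable {n : ℕ} {X : Matrix (Fin n) (Fin n) ℂ}

lemma mrpow_eq (hX : X.IsHermitian) (t : ℝ) :
    mrpow X t = fc hX (fun x => x ^ t) := by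
  rw [mrpow, dif_pos hX]; rfl

lemma fc_congr (hX : X.IsHermitian) {f g : ℝ → ℝ}
    (hfg : ∀ i, f (hX.eigenvalues i) = g (hX.eigenvalues i)) : fc hX f = fc hX g := by
  have h2 : (fun i => ((f (hX.eigenvalues i) : ℝ) : ℂ))
      = fun i => ((g (hX.eigenvalues i) : ℝ) : ℂ) := funext fun i => by rw [hfg]
  unfold fc
  rw [h2]

lemma fc_add (hX : X.IsHermitian) (f g : ℝ → ℝ) :
    fc hX (fun x => f x + g x) = fc hX f + fc hX g := by
  unfold fc
  rw [show (fun i => ((f (hX.eigenvalues i) + g (hX.eigenvalues i) : ℝ) : ℂ))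
      = fun i => ((f (hX.eigenvalues i) : ℝ) : ℂ) + ((g (hX.eigenvalues i) : ℝ) : ℂ) from
    funext fun i => by push_cast; ring, ← Matrix.diagonal_add, Matrix.mul_add, Matrix.add_mul]

lemma fc_sub (hX : X.IsHermitian) (f g : ℝ → ℝ) :
    fc hX (fun x => f x - g x) = fc hX f - fc hX g := by
  unfold fc
  rw [show (fun i => ((f (hX.eigenvalues i) - g (hX.eigenvalues i) : ℝ) : ℂ))
      = fun i => ((f (hX.eigenvalues i) : ℝ) : ℂ) - ((g (hX.eigenvalues i) : ℝ) : ℂ) from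
    funext fun i => by push_cast; ring, ← Matrix.diagonal_sub, Matrix.mul_sub, Matrix.sub_mul]

lemma fc_smul (hX : X.IsHermitian) (c : ℝ) (f : ℝ → ℝ) :
    fc hX (fun x => c * f x) = (c : ℂ) • fc hX f := by
  unfold fc
  rw [show (fun i => ((c * f (hX.eigenvalues i) : ℝ) : ℂ))
      = (c : ℂ) • fun i => ((f (hX.eigenvalues i) : ℝ) : ℂ) from
    funext fun i => by simp only [Pi.smul_apply, smul_eq_mul]; push_cast; ring,
    Matrix.diagonal_smul, Matrix.mul_smul, Matrix.smul_mul]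

lemma fc_mul (hX : X.IsHermitian) (f g : ℝ → ℝ) :
    fc hX f * fc hX g = fc hX (fun x => f x * g x) := by
  unfold fc
  have hU : star (hX.eigenvectorUnitary : Matrix (Fin n) (Fin n) ℂ)
      * (hX.eigenvectorUnitary : Matrix (Fin n) (Fin n) ℂ) = 1 :=
    Matrix.mem_unitaryGroup_iff'.mp hX.eigenvectorUnitary.2
  simp only [Matrix.mul_assoc]
  rw [show star (hX.eigenvectorUnitary : Matrix (Fin n) (Fin n) ℂ)
      * ((hX.eigenvectorUnitary : Matrix (Fin n) (Fin n) ℂ)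
        * (Matrix.diagonal (fun i => ((g (hX.eigenvalues i) : ℝ) : ℂ))
          * star (hX.eigenvectorUnitary : Matrix (Fin n) (Fin n) ℂ)))
      = Matrix.diagonal (fun i => ((g (hX.eigenvalues i) : ℝ) : ℂ))
          * star (hX.eigenvectorUnitary : Matrix (Fin n) (Fin n) ℂ) from by
    rw [← Matrix.mul_assoc, hU, Matrix.one_mul]]
  rw [← Matrix.mul_assoc (Matrix.diagonal _), Matrix.diagonal_mul_diagonal]
  congr 2
  funext i
  push_cast
  ring

lemma fc_one (hX : X.IsHermitian) : fc hX (fun _ => 1) = 1 := by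
  unfold fc
  have hU : (hX.eigenvectorUnitary : Matrix (Fin n) (Fin n) ℂ)
      * star (hX.eigenvectorUnitary : Matrix (Fin n) (Fin n) ℂ) = 1 :=
    Matrix.mem_unitaryGroup_iff.mp hX.eigenvectorUnitary.2
  simp only [Complex.ofReal_one]
  rw [Matrix.diagonal_one, Matrix.mul_one, hU]

lemma fc_id (hX : X.IsHermitian) : fc hX (fun x => x) = X := by
  conv_rhs => rw [hX.spectral_theorem]
  rfl

lemma fc_psd (hX : X.IsHermitian) {f : ℝ → ℝ}
    (hf : ∀ i, 0 ≤ f (hX.eigenvalues i)) : (fc hX f).PosSemidef := by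
  have hD : (Matrix.diagonal (fun i => ((f (hX.eigenvalues i) : ℝ) : ℂ))).PosSemidef :=
    Matrix.PosSemidef.diagonal (fun i => by
      simpa using Complex.real_le_real.mpr (hf i))
  have := hD.mul_mul_conjTranspose_same (hX.eigenvectorUnitary : Matrix (Fin n) (Fin n) ℂ)
  simpa [fc, Matrix.star_eq_conjTranspose] using this

lemma fc_herm (hX : X.IsHermitian) (f : ℝ → ℝ) : (fc hX f).IsHermitian := by
  have hD : (Matrix.diagonal (fun i => ((f (hX.eigenvalues i) : ℝ) : ℂ))).IsHermitian :=
    Matrix.isHermitian_diagonal_iff.mpr fun i => by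
      simp [_root_.IsSelfAdjoint, Complex.star_def, Complex.conj_ofReal]
  have := Matrix.isHermitian_mul_mul_conjTranspose
    (hX.eigenvectorUnitary : Matrix (Fin n) (Fin n) ℂ) hD
  simpa [fc, Matrix.star_eq_conjTranspose] using this

lemma eig_ge (hX : X.IsHermitian) {c : ℝ}
    (hp : (X - (c : ℂ) • 1).PosSemidef) (i : Fin n) : c ≤ hX.eigenvalues i := by
  set w : Fin n → ℂ := ⇑(hX.eigenvectorBasis i) with hw
  have hmul : X *ᵥ w = ((hX.eigenvalues i : ℝ) : ℂ) • w := by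
    rw [hw, hX.mulVec_eigenvectorBasis]
    funext j
    simp [Pi.smul_apply, Complex.real_smul]
  have hwne : w ≠ 0 := by
    intro h0
    exact (hX.eigenvectorBasis).toBasis.ne_zero i (by ext j; exact congrFun h0 j)
  have hs : 0 < dotProduct (star w) w := dotProduct_star_self_pos_iff.mpr hwne
  have hq := hp.dotProduct_mulVec_nonneg w
  rw [Matrix.sub_mulVec, Matrix.smul_mulVec, Matrix.one_mulVec, hmul,
    dotProduct_sub, dotProduct_smul, dotProduct_smul] at hq
  set s := dotProduct (star w) w with hsdef
  rw [Complex.lt_def] at hs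
  rw [Complex.le_def] at hq
  simp only [smul_eq_mul, Complex.sub_re, Complex.zero_re, Complex.zero_im] at hq hs
  have h2 : 0 ≤ (hX.eigenvalues i - c) * s.re := by
    have h3 := hq.1
    simp only [Complex.mul_re, Complex.ofReal_re, Complex.ofReal_im, zero_mul, sub_zero] at h3
    nlinarith [hs.2]
  nlinarith [hs.1, h2]

lemma eig_le (hX : X.IsHermitian) {c : ℝ}
    (hp : ((c : ℂ) • 1 - X).PosSemidef) (i : Fin n) : hX.eigenvalues i ≤ c := by
  set w : Fin n → ℂ := ⇑(hX.eigenvectorBasis i) with hw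
  have hmul : X *ᵥ w = ((hX.eigenvalues i : ℝ) : ℂ) • w := by
    rw [hw, hX.mulVec_eigenvectorBasis]
    funext j
    simp [Pi.smul_apply, Complex.real_smul]
  have hwne : w ≠ 0 := by
    intro h0
    exact (hX.eigenvectorBasis).toBasis.ne_zero i (by ext j; exact congrFun h0 j)
  have hs : 0 < dotProduct (star w) w := dotProduct_star_self_pos_iff.mpr hwne
  have hq := hp.dotProduct_mulVec_nonneg w
  rw [Matrix.sub_mulVec, Matrix.smul_mulVec, Matrix.one_mulVec, hmul,
    dotProduct_sub, dotProduct_smul, dotProduct_smul] at hq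
  set s := dotProduct (star w) w with hsdef
  rw [Complex.lt_def] at hs
  rw [Complex.le_def] at hq
  simp only [smul_eq_mul, Complex.sub_re, Complex.zero_re, Complex.zero_im] at hq hs
  have h2 : 0 ≤ (c - hX.eigenvalues i) * s.re := by
    have h3 := hq.1
    simp only [Complex.mul_re, Complex.ofReal_re, Complex.ofReal_im, zero_mul, sub_zero] at h3
    nlinarith [hs.2]
  nlinarith [hs.1, h2]

end fclemmas

theorem stmt_10 {n : ℕ} (A B : Matrix (Fin n) (Fin n) ℂ) (m m' M M' v h r r1 rh1 : ℝ)
    (hA : A.PosDef) (hB : B.PosDef)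
    (hm' : 0 < m') (hm : 0 < m) (hM : 0 < M) (hM' : 0 < M') (hmM : m < M)
    (hcond : (loewner ((m' : ℂ) • 1) A ∧ loewner A ((m : ℂ) • 1) ∧
        loewner ((M : ℂ) • 1) B ∧ loewner B ((M' : ℂ) • 1)) ∨
      (loewner ((m' : ℂ) • 1) B ∧ loewner B ((m : ℂ) • 1) ∧
        loewner ((M : ℂ) • 1) A ∧ loewner A ((M' : ℂ) • 1)))
    (hh : h = M / m) (hr : r = min v (1 - v))
    (hr1 : r1 = min (2 * r) (1 - 2 * r)) (hrh1 : rh1 = min (2 * r1) (1 - 2 * r1))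
    (hv0 : 0 < v) (hv : v ≤ 1 / 2) :
    loewner
      (((2 * v : ℝ) : ℂ) • (anabla (1 / 2) A B - asharp (1 / 2) A B)
        + ((r1 : ℝ) : ℂ) • (asharp (1 / 2) A B - (2 : ℂ) • asharp (1 / 4) A B + A)
        + ((Kant (h ^ ((1 : ℝ) / 4)) ^ rh1 : ℝ) : ℂ) • asharp v A B)
      (anabla v A B) := by
  have hh1 : 1 < h := by rw [hh]; exact (one_lt_div hm).mpr hmM
  have hrv : r = v := by rw [hr, min_eq_left (by linarith)]
  have hr1v : r1 = min (2*v) (1-2*v) := by rw [hr1, hrv]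
  -- The square root of A and its inverse
  have hS'herm : (mrpow A (-(1/2))).IsHermitian := by
    rw [mrpow_eq hA.1]; exact fc_herm _ _
  have hSherm : (mrpow A (1/2)).IsHermitian := by
    rw [mrpow_eq hA.1]; exact fc_herm _ _
  have hSS' : mrpow A (1/2) * mrpow A (-(1/2)) = 1 := by
    rw [mrpow_eq hA.1, mrpow_eq hA.1, fc_mul]
    rw [fc_congr hA.1 (g := fun _ => 1) (fun i => by
      rw [← Real.rpow_add (hA.eigenvalues_pos i)]; norm_num)]
    exact fc_one hA.1
  have hS'S : mrpow A (-(1/2)) * mrpow A (1/2) = 1 := by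
    rw [mrpow_eq hA.1, mrpow_eq hA.1, fc_mul]
    rw [fc_congr hA.1 (g := fun _ => 1) (fun i => by
      rw [← Real.rpow_add (hA.eigenvalues_pos i)]; norm_num)]
    exact fc_one hA.1
  have hSS : mrpow A (1/2) * mrpow A (1/2) = A := by
    rw [mrpow_eq hA.1 (1/2), fc_mul]
    rw [fc_congr hA.1 (g := fun x => x) (fun i => by
      rw [← Real.rpow_add (hA.eigenvalues_pos i)]; norm_num)]
    exact fc_id hA.1
  -- T = A^{-1/2} B A^{-1/2}
  have hT : (mrpow A (-(1/2)) * B * mrpow A (-(1/2))).IsHermitian := by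
    have h2 := Matrix.isHermitian_mul_mul_conjTranspose (mrpow A (-(1/2))) hB.1
    rwa [show (mrpow A (-(1/2)))ᴴ = mrpow A (-(1/2)) from hS'herm] at h2
  have hB' : mrpow A (1/2) * (mrpow A (-(1/2)) * B * mrpow A (-(1/2))) * mrpow A (1/2) = B := by
    calc mrpow A (1/2) * (mrpow A (-(1/2)) * B * mrpow A (-(1/2))) * mrpow A (1/2)
        = (mrpow A (1/2) * mrpow A (-(1/2))) * B * (mrpow A (-(1/2)) * mrpow A (1/2)) := by
          simp only [Matrix.mul_assoc]
      _ = B := by rw [hSS', hS'S, Matrix.one_mul, Matrix.mul_one]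
  -- Φ machinery
  have Phi_add : ∀ f g : ℝ → ℝ,
      mrpow A (1/2) * fc hT (fun x => f x + g x) * mrpow A (1/2)
      = mrpow A (1/2) * fc hT f * mrpow A (1/2) + mrpow A (1/2) * fc hT g * mrpow A (1/2) :=
    fun f g => by rw [fc_add, Matrix.mul_add, Matrix.add_mul]
  have Phi_sub : ∀ f g : ℝ → ℝ,
      mrpow A (1/2) * fc hT (fun x => f x - g x) * mrpow A (1/2)
      = mrpow A (1/2) * fc hT f * mrpow A (1/2) - mrpow A (1/2) * fc hT g * mrpow A (1/2) :=
    fun f g => by rw [fc_sub, Matrix.mul_sub, Matrix.sub_mul]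
  have Phi_smul : ∀ (c : ℝ) (f : ℝ → ℝ),
      mrpow A (1/2) * fc hT (fun x => c * f x) * mrpow A (1/2)
      = (c : ℂ) • (mrpow A (1/2) * fc hT f * mrpow A (1/2)) :=
    fun c f => by rw [fc_smul, Matrix.mul_smul, Matrix.smul_mul]
  have ePhiA : mrpow A (1/2) * fc hT (fun _ => 1) * mrpow A (1/2) = A := by
    rw [fc_one, Matrix.mul_one, hSS]
  have ePhiB : mrpow A (1/2) * fc hT (fun x => x) * mrpow A (1/2) = B := by
    rw [fc_id]; exact hB'
  have enabla : ∀ w : ℝ,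
      mrpow A (1/2) * fc hT (fun x => (1 - w) + w * x) * mrpow A (1/2) = anabla w A B := by
    intro w
    rw [show (fun x => (1 - w) + w * x) = (fun x => (1 - w) * 1 + w * x) from
      funext fun x => by ring, Phi_add, Phi_smul, Phi_smul, ePhiA, ePhiB]
    rfl
  have easharp : ∀ w : ℝ,
      mrpow A (1/2) * fc hT (fun x => x ^ w) * mrpow A (1/2) = asharp w A B := by
    intro w
    unfold asharp
    rw [mrpow_eq hT]
  -- spectrum bounds for T
  have hTbound : ∀ i, 0 < hT.eigenvalues i ∧
      (h ≤ hT.eigenvalues i ∨ hT.eigenvalues i ≤ 1/h) := by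
    rcases hcond with ⟨hc1, hc2, hc3, hc4⟩ | ⟨hc1, hc2, hc3, hc4⟩
    · -- A small, B large
      have hAle : ∀ i, hA.1.eigenvalues i ≤ m := fun i => eig_le hA.1 hc2 i
      have hpsd1 : (mrpow A (-(1/2)) * (B - (M:ℂ) • 1) * mrpow A (-(1/2))).PosSemidef := by
        have h2 := (show (B - (M:ℂ) • 1).PosSemidef from hc3).mul_mul_conjTranspose_same
          (mrpow A (-(1/2)))
        rwa [show (mrpow A (-(1/2)))ᴴ = mrpow A (-(1/2)) from hS'herm] at h2
      have e1 : fc hA.1 (fun x => M * (x ^ (-(1/2):ℝ) * x ^ (-(1/2):ℝ)) - h * 1)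
          = (M:ℂ) • (mrpow A (-(1/2)) * mrpow A (-(1/2))) - (h:ℂ) • 1 := by
        rw [fc_sub, fc_smul, fc_smul, ← fc_mul, fc_one, ← mrpow_eq hA.1]
      have hpsd2 : (fc hA.1 (fun x => M * (x ^ (-(1/2):ℝ) * x ^ (-(1/2):ℝ)) - h * 1)).PosSemidef := by
        apply fc_psd
        intro i
        have hp := hA.eigenvalues_pos i
        have hle := hAle i
        have e : (hA.1.eigenvalues i) ^ (-(1/2):ℝ) * (hA.1.eigenvalues i) ^ (-(1/2):ℝ)
            = (hA.1.eigenvalues i)⁻¹ := by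
          rw [← Real.rpow_add hp]
          norm_num [Real.rpow_neg_one]
        rw [e, hh, mul_one]
        have h1 : M / m ≤ M * (hA.1.eigenvalues i)⁻¹ := by
          rw [div_eq_mul_inv]
          exact mul_le_mul_of_nonneg_left (inv_anti₀ hp hle) hM.le
        linarith
      have hdecomp : (mrpow A (-(1/2)) * B * mrpow A (-(1/2))) - (h:ℂ) • 1
          = mrpow A (-(1/2)) * (B - (M:ℂ) • 1) * mrpow A (-(1/2))
            + fc hA.1 (fun x => M * (x ^ (-(1/2):ℝ) * x ^ (-(1/2):ℝ)) - h * 1) := by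
        rw [e1, Matrix.mul_sub, Matrix.sub_mul]
        simp only [Matrix.mul_smul, Matrix.smul_mul, Matrix.mul_one]
        abel
      have hTpsd : ((mrpow A (-(1/2)) * B * mrpow A (-(1/2))) - (h:ℂ) • 1).PosSemidef := by
        rw [hdecomp]; exact hpsd1.add hpsd2
      intro i
      have hge : h ≤ hT.eigenvalues i := eig_ge hT hTpsd i
      exact ⟨by linarith, Or.inl hge⟩
    · -- B small, A large
      have hAge : ∀ i, M ≤ hA.1.eigenvalues i := fun i => eig_ge hA.1 hc3 i
      have hAle : ∀ i, hA.1.eigenvalues i ≤ M' := fun i => eig_le hA.1 hc4 i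
      -- upper bound: T ≤ (1/h) • 1
      have hpsd1 : (mrpow A (-(1/2)) * ((m:ℂ) • 1 - B) * mrpow A (-(1/2))).PosSemidef := by
        have h2 := (show ((m:ℂ) • 1 - B).PosSemidef from hc2).mul_mul_conjTranspose_same
          (mrpow A (-(1/2)))
        rwa [show (mrpow A (-(1/2)))ᴴ = mrpow A (-(1/2)) from hS'herm] at h2
      have e1 : fc hA.1 (fun x => (1/h) * 1 - m * (x ^ (-(1/2):ℝ) * x ^ (-(1/2):ℝ)))
          = ((1/h : ℝ):ℂ) • 1 - (m:ℂ) • (mrpow A (-(1/2)) * mrpow A (-(1/2))) := by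
        rw [fc_sub, fc_smul, fc_smul, ← fc_mul, fc_one, ← mrpow_eq hA.1]
      have hpsd2 : (fc hA.1
          (fun x => (1/h) * 1 - m * (x ^ (-(1/2):ℝ) * x ^ (-(1/2):ℝ)))).PosSemidef := by
        apply fc_psd
        intro i
        have hp : (0:ℝ) < hA.1.eigenvalues i := hA.eigenvalues_pos i
        have hge := hAge i
        have e : (hA.1.eigenvalues i) ^ (-(1/2):ℝ) * (hA.1.eigenvalues i) ^ (-(1/2):ℝ)
            = (hA.1.eigenvalues i)⁻¹ := by
          rw [← Real.rpow_add hp]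
          norm_num [Real.rpow_neg_one]
        rw [e, hh, mul_one, one_div_div]
        have h1 : m * (hA.1.eigenvalues i)⁻¹ ≤ m / M := by
          rw [div_eq_mul_inv]
          exact mul_le_mul_of_nonneg_left (inv_anti₀ hM hge) hm.le
        linarith
      have hdecomp : ((1/h : ℝ):ℂ) • 1 - (mrpow A (-(1/2)) * B * mrpow A (-(1/2)))
          = mrpow A (-(1/2)) * ((m:ℂ) • 1 - B) * mrpow A (-(1/2))
            + fc hA.1 (fun x => (1/h) * 1 - m * (x ^ (-(1/2):ℝ) * x ^ (-(1/2):ℝ))) := by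
        rw [e1, Matrix.mul_sub, Matrix.sub_mul]
        simp only [Matrix.mul_smul, Matrix.smul_mul, Matrix.mul_one]
        abel
      have hTub : (((1/h : ℝ):ℂ) • 1 - (mrpow A (-(1/2)) * B * mrpow A (-(1/2)))).PosSemidef := by
        rw [hdecomp]; exact hpsd1.add hpsd2
      -- lower bound: (m'/M') • 1 ≤ T
      have hpsd3 : (mrpow A (-(1/2)) * (B - (m':ℂ) • 1) * mrpow A (-(1/2))).PosSemidef := by
        have h2 := (show (B - (m':ℂ) • 1).PosSemidef from hc1).mul_mul_conjTranspose_same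
          (mrpow A (-(1/2)))
        rwa [show (mrpow A (-(1/2)))ᴴ = mrpow A (-(1/2)) from hS'herm] at h2
      have e2 : fc hA.1 (fun x => m' * (x ^ (-(1/2):ℝ) * x ^ (-(1/2):ℝ)) - (m'/M') * 1)
          = (m':ℂ) • (mrpow A (-(1/2)) * mrpow A (-(1/2))) - ((m'/M' : ℝ):ℂ) • 1 := by
        rw [fc_sub, fc_smul, fc_smul, ← fc_mul, fc_one, ← mrpow_eq hA.1]
      have hpsd4 : (fc hA.1
          (fun x => m' * (x ^ (-(1/2):ℝ) * x ^ (-(1/2):ℝ)) - (m'/M') * 1)).PosSemidef := by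
        apply fc_psd
        intro i
        have hp : (0:ℝ) < hA.1.eigenvalues i := hA.eigenvalues_pos i
        have hle := hAle i
        have e : (hA.1.eigenvalues i) ^ (-(1/2):ℝ) * (hA.1.eigenvalues i) ^ (-(1/2):ℝ)
            = (hA.1.eigenvalues i)⁻¹ := by
          rw [← Real.rpow_add hp]
          norm_num [Real.rpow_neg_one]
        rw [e, mul_one]
        have h1 : m' / M' ≤ m' * (hA.1.eigenvalues i)⁻¹ := by
          rw [div_eq_mul_inv]
          exact mul_le_mul_of_nonneg_left (inv_anti₀ hp hle) hm'.le
        linarith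
      have hdecomp2 : (mrpow A (-(1/2)) * B * mrpow A (-(1/2))) - ((m'/M' : ℝ):ℂ) • 1
          = mrpow A (-(1/2)) * (B - (m':ℂ) • 1) * mrpow A (-(1/2))
            + fc hA.1 (fun x => m' * (x ^ (-(1/2):ℝ) * x ^ (-(1/2):ℝ)) - (m'/M') * 1) := by
        rw [e2, Matrix.mul_sub, Matrix.sub_mul]
        simp only [Matrix.mul_smul, Matrix.smul_mul, Matrix.mul_one]
        abel
      have hTlb : ((mrpow A (-(1/2)) * B * mrpow A (-(1/2))) - ((m'/M' : ℝ):ℂ) • 1).PosSemidef := by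
        rw [hdecomp2]; exact hpsd3.add hpsd4
      intro i
      have hle : hT.eigenvalues i ≤ 1/h := eig_le hT hTub i
      have hge : m'/M' ≤ hT.eigenvalues i := eig_ge hT hTlb i
      exact ⟨lt_of_lt_of_le (div_pos hm' hM') hge, Or.inr hle⟩
  -- the key identity
  have key : mrpow A (1/2) * fc hT (fun x => ((1 - v) + v * x)
        - ((2 * v) * (((1 - 1/2) + 1/2 * x) - x ^ ((1:ℝ)/2))
          + r1 * ((x ^ ((1:ℝ)/2) - 2 * x ^ ((1:ℝ)/4)) + 1)
          + (Kant (h ^ ((1:ℝ)/4)) ^ rh1) * x ^ v)) * mrpow A (1/2)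
      = anabla v A B
        - (((2 * v : ℝ) : ℂ) • (anabla (1 / 2) A B - asharp (1 / 2) A B)
          + ((r1 : ℝ) : ℂ) • (asharp (1 / 2) A B - (2 : ℂ) • asharp (1 / 4) A B + A)
          + ((Kant (h ^ ((1 : ℝ) / 4)) ^ rh1 : ℝ) : ℂ) • asharp v A B) := by
    rw [Phi_sub, enabla v, Phi_add, Phi_add, Phi_smul (2*v), Phi_smul r1,
      Phi_smul (Kant (h ^ ((1:ℝ)/4)) ^ rh1), Phi_sub, enabla (1/2), Phi_add, Phi_sub,
      Phi_smul 2, easharp ((1:ℝ)/2), easharp ((1:ℝ)/4), easharp v, ePhiA]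
    norm_num
  -- positivity of the fc part
  have hfc : (fc hT (fun x => ((1 - v) + v * x)
      - ((2 * v) * (((1 - 1/2) + 1/2 * x) - x ^ ((1:ℝ)/2))
        + r1 * ((x ^ ((1:ℝ)/2) - 2 * x ^ ((1:ℝ)/4)) + 1)
        + (Kant (h ^ ((1:ℝ)/4)) ^ rh1) * x ^ v))).PosSemidef := by
    apply fc_psd
    intro i
    obtain ⟨hx, hxb⟩ := hTbound i
    have := scalar_main hv0 hv hh1 hr1v hrh1 hx hxb
    rw [sub_nonneg]
    linarith
  show (anabla v A B - _).PosSemidef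
  rw [← key]
  have hfin := hfc.mul_mul_conjTranspose_same (mrpow A (1/2))
  rwa [show (mrpow A (1/2))ᴴ = mrpow A (1/2) from hSherm] at hfin
end
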